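/- (Dodgson condensation / Lewis Carroll's identity) For an n×n matrix M over a commutative ring and indices 1 ≤ a < a' ≤ n, 1 ≤ b < b' ≤ n: det(M) · det(M with rows a,a' and columns b,b' removed) = det(M with row a, column b removed) · det(M with row a', column b' removed) − det(M with row a, column b' removed) · det(M with row a', column b removed). -/

import Mathlib

open Matrix

set_option maxHeartbeats 1000000

namespace DodgsonAux

variable {R : Type*} [CommRing R] {n : ℕ}

lemma updateRow_comm' {m k : Type*} [DecidableEq m] (M : Matrix m k R) {i j : m} (h : i ≠ j)
    (u v : k → R) : (M.updateRow i u).updateRow j v = (M.updateRow j v).updateRow i u := by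
  ext x y
  rcases eq_or_ne x i with rfl | hi <;> rcases eq_or_ne x j with rfl | hj <;>
    simp_all [Matrix.updateRow_apply]

lemma submatrix_updateRow' {m : ℕ} {κ κ' : Type*} (M : Matrix (Fin (m+1)) κ R)
    (p : Fin (m+1)) (i : Fin m) (u : κ → R) (g : κ' → κ) :
    (M.updateRow (p.succAbove i) u).submatrix p.succAbove g
      = (M.submatrix p.succAbove g).updateRow i (u ∘ g) := by
  ext x y
  simp [Matrix.submatrix_apply, Matrix.updateRow_apply, Fin.succAbove_right_inj]

lemma single_comp' {m : ℕ} (p : Fin (m+1)) (k : Fin m) :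
    ((Pi.single (p.succAbove k) 1 : Fin (m+1) → R)) ∘ p.succAbove
      = (Pi.single k 1 : Fin m → R) := by
  funext l
  simp [Pi.single_apply, Fin.succAbove_right_inj]

lemma submatrix_updateRow'' {m : ℕ} {κ κ' : Type*} (M : Matrix (Fin (m+1)) κ R)
    (p : Fin (m+1)) (i : Fin m) (u : κ → R) (g : κ' → κ) {x : Fin (m+1)}
    (h : p.succAbove i = x) :
    (M.updateRow x u).submatrix p.succAbove g
      = (M.submatrix p.succAbove g).updateRow i (u ∘ g) := by
  subst h
  exact submatrix_updateRow' M p i u g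

lemma comp_single {m : ℕ} (p : Fin (m+1)) (k : Fin m) {x : Fin (m+1)}
    (h : p.succAbove k = x) :
    ((Pi.single x 1 : Fin (m+1) → R)) ∘ p.succAbove = (Pi.single k 1 : Fin m → R) := by
  subst h
  exact single_comp' p k

lemma submatrix_updateRow3 {m : ℕ} {κ κ' : Type*} (M : Matrix (Fin (m+1)) κ R)
    (p : Fin (m+1)) (i : Fin m) (u : κ → R) (g : κ' → κ) {x : Fin (m+1)} {w : κ' → R}
    (h : p.succAbove i = x) (hw : u ∘ g = w) :
    (M.updateRow x u).submatrix p.succAbove g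
      = (M.submatrix p.succAbove g).updateRow i w := by
  subst h hw
  exact submatrix_updateRow' M p i u g

lemma succAbove_mk_of_lt {m : ℕ} {x p : Fin (m+1)} (h : x < p) (hx : (x:ℕ) < m) :
    p.succAbove ⟨(x:ℕ), hx⟩ = x := by
  rw [Fin.succAbove_of_castSucc_lt]
  · exact Fin.ext rfl
  · rw [Fin.lt_def, Fin.coe_castSucc]
    exact h

lemma det_double_update (M : Matrix (Fin (n+2)) (Fin (n+2)) R) {a a' b b' : Fin (n+2)}
    (ha : a < a') (hb : b < b') :
    ((M.updateRow a (Pi.single b 1)).updateRow a' (Pi.single b' 1)).det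
      = (-1)^((a:ℕ)+(b:ℕ)) * ((-1)^((a':ℕ)+(b':ℕ)) *
        ((M.submatrix a'.succAbove b'.succAbove).submatrix
          (⟨(a : ℕ), (by omega : (a : ℕ) < n + 1 + 0)⟩ : Fin (n + 1)).succAbove
          (⟨(b : ℕ), (by omega : (b : ℕ) < n + 1 + 0)⟩ : Fin (n + 1)).succAbove).det) := by
  have haa : a'.succAbove ⟨(a:ℕ), by omega⟩ = a := succAbove_mk_of_lt ha (by omega)
  have hbb : b'.succAbove ⟨(b:ℕ), by omega⟩ = b := succAbove_mk_of_lt hb (by omega)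
  rw [← Matrix.adjugate_apply, Matrix.adjugate_fin_succ_eq_det_submatrix]
  have hsc := comp_single (R := R) b' ⟨(b:ℕ), by omega⟩ hbb
  have key := submatrix_updateRow3 M a' ⟨(a:ℕ), by omega⟩
    (Pi.single b 1 : Fin (n+2) → R) b'.succAbove haa hsc
  rw [key, ← Matrix.adjugate_apply, Matrix.adjugate_fin_succ_eq_det_submatrix]
  simp only [Fin.val_mk]
  ring

lemma det_one_double {a a' : Fin (n+2)} (ha : a < a') (u v : Fin (n+2) → R) :
    (((1 : Matrix (Fin (n+2)) (Fin (n+2)) R).updateRow a u).updateRow a' v).det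
      = u a * v a' - u a' * v a := by
  have hne : a ≠ a' := ha.ne
  have haa : a'.succAbove ⟨(a:ℕ), by omega⟩ = a := succAbove_mk_of_lt ha (by omega)
  set c : Fin n → Fin (n+2) :=
    fun i => a'.succAbove ((⟨(a:ℕ), by omega⟩ : Fin (n+1)).succAbove i) with hc
  have hcinj : Function.Injective c := fun i j hij =>
    Fin.succAbove_right_injective (Fin.succAbove_right_injective hij)
  have hca' : ∀ i, c i ≠ a' := fun i => Fin.succAbove_ne _ _
  have hca : ∀ i, c i ≠ a := by
    intro i h
    rw [← haa] at h
    exact Fin.succAbove_ne _ i (Fin.succAbove_right_injective h)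
  have hbij : Function.Bijective (Sum.elim ![a, a'] c) := by
    rw [Fintype.bijective_iff_injective_and_card]
    constructor
    · rintro (i | i) (j | j) hij
      · fin_cases i <;> fin_cases j <;> simp_all
      · fin_cases i <;>
          [exact absurd hij.symm (hca j); exact absurd hij.symm (hca' j)]
      · fin_cases j <;>
          [exact absurd hij (hca i); exact absurd hij (hca' i)]
      · exact congrArg Sum.inr (hcinj hij)
    · simp only [Fintype.card_sum, Fintype.card_fin]
      omega
  set E := Equiv.ofBijective _ hbij with hE
  rw [← Matrix.det_submatrix_equiv_self E]
  have hsub : (((1 : Matrix (Fin (n+2)) (Fin (n+2)) R).updateRow a u).updateRow a' v).submatrix E E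
      = Matrix.fromBlocks !![u a, u a'; v a, v a'] (Matrix.of ![u ∘ c, v ∘ c]) 0 1 := by
    ext i j
    rcases i with i | i <;> rcases j with j | j
    · fin_cases i <;> fin_cases j <;>
        simp [hE, Matrix.updateRow_apply, hne, Matrix.one_apply]
    · fin_cases i <;>
        simp [hE, Matrix.updateRow_apply, hne, hca j, hca' j, Matrix.one_apply]
    · fin_cases j <;>
        simp [hE, Matrix.updateRow_apply, hca i, hca' i, Matrix.one_apply]
    · simp [hE, Matrix.updateRow_apply, hca i, hca' i, hca j, hca' j,
        Matrix.one_apply, hcinj.eq_iff]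
  rw [hsub, Matrix.det_fromBlocks_zero₂₁, Matrix.det_one, mul_one,
    Matrix.det_fin_two_of]

lemma gen (M : Matrix (Fin (n+2)) (Fin (n+2)) R) (a a' b b' : Fin (n+2))
    (ha : a < a') (hb : b < b') :
    M.det * (M.det *
      ((M.submatrix a'.succAbove b'.succAbove).submatrix
        (⟨(a : ℕ), (by omega : (a : ℕ) < n + 1 + 0)⟩ : Fin (n + 1)).succAbove
        (⟨(b : ℕ), (by omega : (b : ℕ) < n + 1 + 0)⟩ : Fin (n + 1)).succAbove).det) =
    M.det * ((M.submatrix a.succAbove b.succAbove).det *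
        (M.submatrix a'.succAbove b'.succAbove).det -
      (M.submatrix a.succAbove b'.succAbove).det *
        (M.submatrix a'.succAbove b.succAbove).det) := by
  have hne : a ≠ a' := ha.ne
  set D := ((1 : Matrix (Fin (n+2)) (Fin (n+2)) R).updateRow a
      (M.adjugate b)).updateRow a' (M.adjugate b') with hD
  have adjrow : ∀ (b0 : Fin (n+2)) (j : Fin (n+2)),
      ∑ k, M.adjugate b0 k * M k j = M.det * (Pi.single b0 1 : Fin (n+2) → R) j := by
    intro b0 j
    have h := congrFun (congrFun (Matrix.adjugate_mul M) b0) j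
    rw [Matrix.mul_apply] at h
    rw [h]
    simp [Matrix.one_apply, Pi.single_apply, eq_comm]
  have hDM : D * M = (M.updateRow a (M.det • (Pi.single b 1 : Fin (n+2) → R))).updateRow a'
      (M.det • (Pi.single b' 1 : Fin (n+2) → R)) := by
    ext i j
    rw [Matrix.mul_apply]
    rcases eq_or_ne i a' with rfl | hia'
    · rw [hD]
      simp only [Matrix.updateRow_self, Pi.smul_apply, smul_eq_mul]
      exact adjrow b' j
    rcases eq_or_ne i a with rfl | hia
    · rw [hD]
      simp only [Matrix.updateRow_ne hia', Matrix.updateRow_self, Pi.smul_apply, smul_eq_mul]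
      exact adjrow b j
    · rw [hD]
      simp only [Matrix.updateRow_ne hia', Matrix.updateRow_ne hia]
      rw [← Matrix.mul_apply]
      try rw [Matrix.one_mul]
  have h1 : D.det * M.det = M.det * (M.det *
      ((M.updateRow a (Pi.single b 1)).updateRow a' (Pi.single b' 1)).det) := by
    rw [← Matrix.det_mul, hDM, Matrix.det_updateRow_smul, updateRow_comm' _ hne,
      Matrix.det_updateRow_smul, updateRow_comm' _ hne.symm]
    try ring
  have h2 : D.det = ((-1)^((a:ℕ)+(b:ℕ)) * (M.submatrix a.succAbove b.succAbove).det) *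
        ((-1)^((a':ℕ)+(b':ℕ)) * (M.submatrix a'.succAbove b'.succAbove).det) -
      ((-1)^((a':ℕ)+(b:ℕ)) * (M.submatrix a'.succAbove b.succAbove).det) *
        ((-1)^((a:ℕ)+(b':ℕ)) * (M.submatrix a.succAbove b'.succAbove).det) := by
    rw [hD, det_one_double ha, Matrix.adjugate_fin_succ_eq_det_submatrix,
      Matrix.adjugate_fin_succ_eq_det_submatrix, Matrix.adjugate_fin_succ_eq_det_submatrix,
      Matrix.adjugate_fin_succ_eq_det_submatrix]
  have h3 := det_double_update M ha hb
  rw [h2, h3] at h1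
  set s : R := (-1)^((a:ℕ)+(b:ℕ)+((a':ℕ)+(b':ℕ))) with hs_def
  have e1 : ((-1:R))^((a:ℕ)+(b:ℕ)) * (-1)^((a':ℕ)+(b':ℕ)) = s := by
    rw [hs_def, ← pow_add]
  have e2 : ((-1:R))^((a':ℕ)+(b:ℕ)) * (-1)^((a:ℕ)+(b':ℕ)) = s := by
    rw [hs_def, ← pow_add]
    congr 1
    omega
  have hs : s * s = 1 := by
    rw [hs_def, ← pow_add]
    exact Even.neg_one_pow ⟨_, rfl⟩
  set K := ((M.submatrix a'.succAbove b'.succAbove).submatrix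
        (⟨(a : ℕ), by omega⟩ : Fin (n + 1)).succAbove
        (⟨(b : ℕ), by omega⟩ : Fin (n + 1)).succAbove).det
  set A1 := (M.submatrix a.succAbove b.succAbove).det
  set A2 := (M.submatrix a'.succAbove b'.succAbove).det
  set A3 := (M.submatrix a.succAbove b'.succAbove).det
  set A4 := (M.submatrix a'.succAbove b.succAbove).det
  linear_combination (-s) * h1 + (s*A1*A2*M.det - s*M.det*M.det*K) * e1 +
    (-(s*A3*A4*M.det)) * e2 + (A1*A2*M.det - A3*A4*M.det - M.det*M.det*K) * hs

end DodgsonAux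

/-- Dodgson condensation / Lewis Carroll's identity. -/
theorem dodgson_condensation {R : Type*} [CommRing R] {n : ℕ}
    (M : Matrix (Fin (n + 2)) (Fin (n + 2)) R)
    (a a' b b' : Fin (n + 2)) (ha : a < a') (hb : b < b') :
    M.det *
      ((M.submatrix a'.succAbove b'.succAbove).submatrix
        (⟨(a : ℕ), by omega⟩ : Fin (n + 1)).succAbove
        (⟨(b : ℕ), by omega⟩ : Fin (n + 1)).succAbove).det =
    (M.submatrix a.succAbove b.succAbove).det *
        (M.submatrix a'.succAbove b'.succAbove).det -
      (M.submatrix a.succAbove b'.succAbove).det *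
        (M.submatrix a'.succAbove b.succAbove).det := by
  classical
  set G := Matrix.mvPolynomialX (Fin (n+2)) (Fin (n+2)) ℤ with hGdef
  have hg := DodgsonAux.gen G a a' b b' ha hb
  have hdet : G.det ≠ 0 := Matrix.det_mvPolynomialX_ne_zero (Fin (n+2)) ℤ
  have hG := mul_left_cancel₀ hdet hg
  set φ : MvPolynomial ((Fin (n+2)) × (Fin (n+2))) ℤ →ₐ[ℤ] R :=
    MvPolynomial.aeval (fun p : (Fin (n+2)) × (Fin (n+2)) => M p.1 p.2) with hφ
  have hmap : G.map φ = M := by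
    have := Matrix.mvPolynomialX_mapMatrix_aeval (S := R)
      (ℤ) (M : Matrix (Fin (n+2)) (Fin (n+2)) R)
    rwa [AlgHom.mapMatrix_apply] at this
  have h2 := congrArg φ hG
  simp only [_root_.map_mul, _root_.map_sub, AlgHom.map_det, AlgHom.mapMatrix_apply,
    ← Matrix.submatrix_map, hmap] at h2
  exact h2
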